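/- Let n ≥ 2 be an integer, let r ≥ 1 be a real number, and let x₁ ≥ x₂ ≥ … ≥ xₙ ≥ 0 be real numbers. Set x̄ = (1/n)·Σ_{i=1}^n xᵢ and x_{1,j} = (1/j)·Σ_{i=1}^{j} xᵢ. Then for every 1 ≤ j ≤ n−1, x_{1,j} ≤ x̄ + ( (1/n)·Σ_{i=1}^n |xᵢ − x̄|^{2r} / ( j/n + (j/n)^{2r}·(1 − j/n)^{1−2r} ) )^{1/(2r)} ≤ x̄ + ( ( (1/n)·Σ_{i=1}^n xᵢ^{2r} − x̄^{2r} ) / ( j/n + (j/n)^{2r}·(1 − j/n)^{1−2r} ) )^{1/(2r)}. -/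

import Mathlib

open Finset Set

lemma superadd_aux {p a b : ℝ} (hp : 1 ≤ p) (ha : 0 ≤ a) (hb : 0 ≤ b) :
    a ^ p + b ^ p ≤ (a + b) ^ p := by
  lift a to NNReal using ha
  lift b to NNReal using hb
  have h := NNReal.add_rpow_le_rpow_add a b hp
  have := (NNReal.coe_le_coe).2 h
  push_cast [NNReal.coe_rpow] at this
  exact_mod_cast this

lemma superquad_aux {p a y : ℝ} (hp : 2 ≤ p) (ha : 0 ≤ a) (hy : 0 ≤ y) :
    a ^ p + p * a ^ (p - 1) * (y - a) + |y - a| ^ p ≤ y ^ p := by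
  have hp1 : (1:ℝ) ≤ p := by linarith
  have hp1' : (1:ℝ) ≤ p - 1 := by linarith
  have hp0 : p ≠ 0 := by linarith
  have hp10 : p - 1 ≠ 0 := by linarith
  rcases eq_or_lt_of_le ha with h0 | ha0
  · subst h0
    simp [Real.zero_rpow hp0, Real.zero_rpow hp10, abs_of_nonneg hy]
  have hap : a ^ (p-1) * a = a ^ p := by
    rw [← Real.rpow_add_one (ne_of_gt ha0)]; ring_nf
  rcases le_or_gt a y with hay | hya
  · -- case a ≤ y : g z = z^p - p*a^(p-1)*z - (z-a)^p monotone on Ici a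
    set g : ℝ → ℝ := fun z => z ^ p - p * a ^ (p-1) * z - (z - a) ^ p with hg
    have hcont : ContinuousOn g (Ici a) := by
      apply ContinuousOn.sub
      apply ContinuousOn.sub
      · exact (Real.continuous_rpow_const (by linarith)).continuousOn
      · fun_prop
      · exact ((Real.continuous_rpow_const (by linarith)).comp
          (continuous_id.sub continuous_const)).continuousOn
    have hderiv : ∀ z ∈ interior (Ici a), 0 ≤ deriv g z := by
      intro z hz
      rw [interior_Ici] at hz
      have hz' : a < z := hz
      have hd : HasDerivAt g (p * z ^ (p-1) - p * a ^ (p-1) - p * (z-a) ^ (p-1) * 1) z := by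
        have h1 : HasDerivAt (fun z : ℝ => z ^ p) (p * z ^ (p-1)) z :=
          Real.hasDerivAt_rpow_const (Or.inr hp1)
        have h2 : HasDerivAt (fun z : ℝ => p * a ^ (p-1) * z) (p * a ^ (p-1)) z := by
          simpa using (hasDerivAt_id z).const_mul (p * a ^ (p-1))
        have h3 : HasDerivAt (fun z : ℝ => (z - a) ^ p) (p * (z-a) ^ (p-1) * 1) z := by
          exact (Real.hasDerivAt_rpow_const (x := z - a) (Or.inr hp1)).comp z
            ((hasDerivAt_id z).sub_const a)
        exact (h1.sub h2).sub h3
      rw [hd.deriv]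
      have key : a ^ (p-1) + (z - a) ^ (p-1) ≤ z ^ (p-1) := by
        have := superadd_aux hp1' ha0.le (by linarith : (0:ℝ) ≤ z - a)
        simpa using this
      nlinarith [key, (by linarith : (0:ℝ) < p)]
    have hdiff : Differentiable ℝ g := by
      apply Differentiable.sub
      apply Differentiable.sub
      · exact Real.differentiable_rpow_const hp1
      · fun_prop
      · exact (Real.differentiable_rpow_const hp1).comp (differentiable_id.sub_const a)
    have hmono := monotoneOn_of_deriv_nonneg (convex_Ici a) hcont
      (hdiff.differentiableOn) hderiv
    have := hmono (self_mem_Ici) (mem_Ici.2 hay) hay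
    simp only [hg] at this
    rw [sub_self, Real.zero_rpow hp0] at this
    rw [abs_of_nonneg (by linarith : (0:ℝ) ≤ y - a)]
    nlinarith [this]
  · -- case y < a : h z = z^p - p*a^(p-1)*z - (a-z)^p antitone on Icc 0 a
    set g : ℝ → ℝ := fun z => z ^ p - p * a ^ (p-1) * z - (a - z) ^ p with hg
    have hcont : ContinuousOn g (Icc 0 a) := by
      apply ContinuousOn.sub
      apply ContinuousOn.sub
      · exact (Real.continuous_rpow_const (by linarith)).continuousOn
      · fun_prop
      · exact ((Real.continuous_rpow_const (by linarith)).comp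
          (continuous_const.sub continuous_id)).continuousOn
    have hdiff : Differentiable ℝ g := by
      apply Differentiable.sub
      apply Differentiable.sub
      · exact Real.differentiable_rpow_const hp1
      · fun_prop
      · exact (Real.differentiable_rpow_const hp1).comp ((differentiable_const a).sub differentiable_id)
    have hderiv : ∀ z ∈ interior (Icc 0 a), deriv g z ≤ 0 := by
      intro z hz
      rw [interior_Icc] at hz
      obtain ⟨hz0, hza⟩ := hz
      have hd : HasDerivAt g (p * z ^ (p-1) - p * a ^ (p-1) - p * (a-z) ^ (p-1) * (-1)) z := by
        have h1 : HasDerivAt (fun z : ℝ => z ^ p) (p * z ^ (p-1)) z :=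
          Real.hasDerivAt_rpow_const (Or.inr hp1)
        have h2 : HasDerivAt (fun z : ℝ => p * a ^ (p-1) * z) (p * a ^ (p-1)) z := by
          simpa using (hasDerivAt_id z).const_mul (p * a ^ (p-1))
        have h3 : HasDerivAt (fun z : ℝ => (a - z) ^ p) (p * (a-z) ^ (p-1) * (-1)) z := by
          have := (Real.hasDerivAt_rpow_const (x := a - z) (Or.inr hp1)).comp z
            (((hasDerivAt_id z).const_sub a))
          exact this
        exact (h1.sub h2).sub h3
      rw [hd.deriv]
      have key : z ^ (p-1) + (a - z) ^ (p-1) ≤ a ^ (p-1) := by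
        have := superadd_aux hp1' hz0.le (by linarith : (0:ℝ) ≤ a - z)
        simpa using this
      nlinarith [key, (by linarith : (0:ℝ) < p)]
    have hanti := antitoneOn_of_deriv_nonpos (convex_Icc 0 a) hcont
      (hdiff.differentiableOn) hderiv
    have := hanti (mem_Icc.2 ⟨hy, hya.le⟩) (right_mem_Icc.2 (by linarith)) hya.le
    simp only [hg] at this
    rw [sub_self, Real.zero_rpow hp0] at this
    rw [abs_of_nonpos (by linarith : y - a ≤ 0)]
    have hne : -(y - a) = a - y := by ring
    rw [hne]
    nlinarith [this]

lemma blockJensen_aux {p : ℝ} (hp : 1 ≤ p) (s : Finset ℕ) (hs : s.Nonempty) (d : ℕ → ℝ) :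
    (s.card : ℝ) * (|∑ i ∈ s, d i| / s.card) ^ p ≤ ∑ i ∈ s, |d i| ^ p := by
  have hk : (0:ℝ) < s.card := by exact_mod_cast Finset.card_pos.2 hs
  have step1 : |∑ i ∈ s, d i| / s.card ≤ (∑ i ∈ s, |d i|) / s.card := by
    gcongr
    exact Finset.abs_sum_le_sum_abs _ _
  have step2 : ((∑ i ∈ s, |d i|) / s.card) ^ p ≤ (1 / s.card) * ∑ i ∈ s, |d i| ^ p := by
    have hconv : ConvexOn ℝ (Ici 0) fun x : ℝ => x ^ p := convexOn_rpow hp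
    have := hconv.map_sum_le (t := s) (w := fun _ => 1 / (s.card:ℝ)) (p := fun i => |d i|)
      (fun i _ => by positivity)
      (by rw [Finset.sum_const, nsmul_eq_mul, mul_one_div_cancel hk.ne'])
      (fun i _ => Set.mem_Ici.2 (abs_nonneg _))
    simp only [smul_eq_mul] at this
    calc ((∑ i ∈ s, |d i|) / s.card) ^ p
        = (∑ i ∈ s, 1 / (s.card:ℝ) * |d i|) ^ p := by
          rw [← Finset.mul_sum]; ring_nf
      _ ≤ ∑ i ∈ s, 1 / (s.card:ℝ) * |d i| ^ p := this
      _ = (1 / s.card) * ∑ i ∈ s, |d i| ^ p := by rw [← Finset.mul_sum]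
  have step3 : (|∑ i ∈ s, d i| / s.card) ^ p ≤ ((∑ i ∈ s, |d i|) / s.card) ^ p :=
    Real.rpow_le_rpow (by positivity) step1 (by linarith)
  calc (s.card : ℝ) * (|∑ i ∈ s, d i| / s.card) ^ p
      ≤ (s.card : ℝ) * ((1 / s.card) * ∑ i ∈ s, |d i| ^ p) := by
        apply mul_le_mul_of_nonneg_left (step3.trans step2) hk.le
    _ = ∑ i ∈ s, |d i| ^ p := by field_simp

/-- Corollary 1 a. (uniform weights): bound on the average of the `j` largest
entries via deviations and via the superquadratic Jensen gap of `x ↦ x^(2r)`. -/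
theorem stmt_11 (n : ℕ) (hn : 2 ≤ n) (r : ℝ) (hr : 1 ≤ r) (x : ℕ → ℝ)
    (hmono : ∀ i, 1 ≤ i → i ≤ n - 1 → x (i + 1) ≤ x i)
    (hpos : ∀ i ∈ Finset.Icc 1 n, 0 ≤ x i)
    (xbar : ℝ) (hxbar : xbar = (1 / n) * ∑ i ∈ Finset.Icc 1 n, x i) :
    ∀ j, 1 ≤ j → j ≤ n - 1 →
      (1 / (j : ℝ)) * ∑ i ∈ Finset.Icc 1 j, x i ≤
        xbar + (((1 / n) * ∑ i ∈ Finset.Icc 1 n, |x i - xbar| ^ (2*r)) /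
          ((j / n : ℝ) + ((j / n : ℝ)) ^ (2*r) * (1 - (j / n : ℝ)) ^ (1 - 2*r)))
            ^ (1/(2*r)) ∧
      xbar + (((1 / n) * ∑ i ∈ Finset.Icc 1 n, |x i - xbar| ^ (2*r)) /
          ((j / n : ℝ) + ((j / n : ℝ)) ^ (2*r) * (1 - (j / n : ℝ)) ^ (1 - 2*r)))
            ^ (1/(2*r)) ≤
        xbar + ((((1 / n) * ∑ i ∈ Finset.Icc 1 n, x i ^ (2*r)) - xbar ^ (2*r)) /
          ((j / n : ℝ) + ((j / n : ℝ)) ^ (2*r) * (1 - (j / n : ℝ)) ^ (1 - 2*r)))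
            ^ (1/(2*r)) := by
  intro j hj1 hjn1
  set p : ℝ := 2 * r with hpdef
  have hp2 : (2:ℝ) ≤ p := by simp only [hpdef]; linarith
  have hp1 : (1:ℝ) ≤ p := by linarith
  have hp0 : p ≠ 0 := by linarith
  have hppos : (0:ℝ) < p := by linarith
  -- numeric setup
  have hjn : j < n := lt_of_le_of_lt hjn1 (Nat.sub_lt (by omega) one_pos)
  set N : ℝ := (n : ℝ) with hNdef
  set J : ℝ := (j : ℝ) with hJdef
  have hN : (0:ℝ) < N := by rw [hNdef]; exact_mod_cast (by omega : 0 < n)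
  have hJ : (0:ℝ) < J := by rw [hJdef]; exact_mod_cast hj1
  have hJN : J < N := by rw [hJdef, hNdef]; exact_mod_cast hjn
  set K : ℝ := N - J with hKdef
  have hK : (0:ℝ) < K := by rw [hKdef]; linarith
  -- denominators
  have hone_sub : 1 - J / N = K / N := by field_simp [hKdef]; rw [hKdef]
  set D : ℝ := J / N + (J / N) ^ p * (1 - J / N) ^ (1 - p) with hDdef
  have hNpow : N ^ p * N ^ (1 - p) = N := by
    rw [← Real.rpow_add hN]; ring_nf; exact Real.rpow_one N
  have hD_eq : D = (J + J ^ p * K ^ (1 - p)) / N := by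
    rw [hDdef, hone_sub, Real.div_rpow hJ.le hN.le, Real.div_rpow hK.le hN.le]
    rw [div_mul_div_comm]
    rw [div_add_div _ _ (ne_of_gt hN) (by positivity : N ^ p * N ^ (1-p) ≠ 0)]
    rw [hNpow]
    field_simp
  have hDpos : (0:ℝ) < D := by
    rw [hD_eq]
    have h1 : (0:ℝ) < J ^ p * K ^ (1 - p) :=
      mul_pos (Real.rpow_pos_of_pos hJ p) (Real.rpow_pos_of_pos hK (1-p))
    positivity
  -- sums and splitting
  have hsum : ∑ i ∈ Finset.Icc 1 n, x i = N * xbar := by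
    rw [hxbar]; field_simp
  have hxbar0 : 0 ≤ xbar := by
    rw [hxbar]
    apply mul_nonneg (by positivity)
    exact Finset.sum_nonneg hpos
  set d : ℕ → ℝ := fun i => x i - xbar with hddef
  set A : ℝ := ∑ i ∈ Finset.Icc 1 j, d i with hAdef
  set B : ℝ := ∑ i ∈ Finset.Icc (j+1) n, d i with hBdef
  have hsplit : ∀ f : ℕ → ℝ, ∑ i ∈ Finset.Icc 1 j, f i + ∑ i ∈ Finset.Icc (j+1) n, f i
      = ∑ i ∈ Finset.Icc 1 n, f i := by
    intro f
    rw [show Finset.Icc 1 j = Finset.Ioc 0 j from by rw [← Finset.Icc_add_one_left_eq_Ioc]; rfl,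
        show Finset.Icc (j+1) n = Finset.Ioc j n from by rw [← Finset.Icc_add_one_left_eq_Ioc],
        show Finset.Icc 1 n = Finset.Ioc 0 n from by rw [← Finset.Icc_add_one_left_eq_Ioc]; rfl]
    exact Finset.sum_Ioc_consecutive f (Nat.zero_le j) hjn.le
  have hcard1 : (Finset.Icc 1 j).card = j := by rw [Nat.card_Icc]; omega
  have hcard2 : (Finset.Icc (j+1) n).card = n - j := by rw [Nat.card_Icc]; omega
  have hcardn : (Finset.Icc 1 n).card = n := by rw [Nat.card_Icc]; omega
  have hdsum : ∑ i ∈ Finset.Icc 1 n, d i = 0 := by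
    simp only [hddef]
    rw [Finset.sum_sub_distrib, Finset.sum_const, hcardn, hsum, nsmul_eq_mul]
    rw [hNdef]; ring
  have hAB : A + B = 0 := by rw [hAdef, hBdef, hsplit d, hdsum]
  -- relation between mean of top block and A
  have hm : (1 / J) * ∑ i ∈ Finset.Icc 1 j, x i = xbar + A / J := by
    have : ∑ i ∈ Finset.Icc 1 j, x i = A + J * xbar := by
      rw [hAdef]
      simp only [hddef]
      rw [Finset.sum_sub_distrib, Finset.sum_const, hcard1, nsmul_eq_mul, hJdef]
      ring
    rw [this]; field_simp; ring
  set T : ℝ := ∑ i ∈ Finset.Icc 1 n, |x i - xbar| ^ p with hTdef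
  have hT0 : 0 ≤ T := Finset.sum_nonneg fun i _ => Real.rpow_nonneg (abs_nonneg _) p
  have hS0 : 0 ≤ 1 / N * T := by positivity
  have hWpos : (0:ℝ) < J + J ^ p * K ^ (1 - p) := by
    have h1 : (0:ℝ) < J ^ p * K ^ (1 - p) :=
      mul_pos (Real.rpow_pos_of_pos hJ p) (Real.rpow_pos_of_pos hK (1-p))
    linarith
  have hfrac : (1 / N * T) / D = T / (J + J ^ p * K ^ (1 - p)) := by
    rw [hD_eq]
    field_simp
  constructor
  · -- first inequality
    rw [hm]
    apply add_le_add le_rfl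
    rcases le_or_gt A 0 with hA | hA
    · calc A / J ≤ 0 := div_nonpos_of_nonpos_of_nonneg hA hJ.le
        _ ≤ _ := Real.rpow_nonneg (div_nonneg hS0 hDpos.le) _
    · -- block Jensen estimates
      have hne1 : (Finset.Icc 1 j).Nonempty := by
        rw [← Finset.card_pos, hcard1]; omega
      have hne2 : (Finset.Icc (j+1) n).Nonempty := by
        rw [← Finset.card_pos, hcard2]; omega
      have hcast2 : ((n - j : ℕ) : ℝ) = K := by
        rw [hKdef, hNdef, hJdef]; push_cast [Nat.cast_sub hjn.le]; try ring
      have hBA : B = -A := by linarith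
      have j1 := blockJensen_aux hp1 (Finset.Icc 1 j) hne1 d
      have j2 := blockJensen_aux hp1 (Finset.Icc (j+1) n) hne2 d
      rw [hcard1, ← hAdef, abs_of_pos hA] at j1
      rw [hcard2, hcast2, ← hBdef, hBA, abs_neg, abs_of_pos hA] at j2
      rw [← hJdef] at j1
      have hsumT : ∑ i ∈ Finset.Icc 1 j, |d i| ^ p + ∑ i ∈ Finset.Icc (j+1) n, |d i| ^ p = T := by
        rw [hsplit (fun i => |d i| ^ p), hTdef]
      have hTlow : J * (A / J) ^ p + K * (A / K) ^ p ≤ T := by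
        rw [← hsumT]; exact add_le_add j1 j2
      -- identities
      have hAJ : (A / J) ^ p = A ^ p / J ^ p := Real.div_rpow hA.le hJ.le p
      have hAK : (A / K) ^ p = A ^ p / K ^ p := Real.div_rpow hA.le hK.le p
      have hJid : J / J ^ p = J ^ (1 - p) := by
        rw [Real.rpow_sub hJ, Real.rpow_one]
      have hKid : K / K ^ p = K ^ (1 - p) := by
        rw [Real.rpow_sub hK, Real.rpow_one]
      have hJp : (0:ℝ) < J ^ p := Real.rpow_pos_of_pos hJ p
      have hKp : (0:ℝ) < K ^ p := Real.rpow_pos_of_pos hK p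
      have hTlow' : A ^ p * (J ^ (1-p) + K ^ (1-p)) ≤ T := by
        have e1 : J * (A / J) ^ p = A ^ p * J ^ (1-p) := by
          rw [hAJ, ← hJid]; field_simp
        have e2 : K * (A / K) ^ p = A ^ p * K ^ (1-p) := by
          rw [hAK, ← hKid]; field_simp
        rw [e1, e2] at hTlow; linarith [hTlow]
      have hkey : (A / J) ^ p ≤ (1 / N * T) / D := by
        rw [hfrac, hAJ, div_le_div_iff₀ hJp hWpos]
        have e3 : A ^ p * (J + J ^ p * K ^ (1-p)) = (A ^ p * (J ^ (1-p) + K ^ (1-p))) * J ^ p := by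
          have h4 : J ^ (1-p) * J ^ p = J := by
            rw [← Real.rpow_add hJ]; ring_nf; exact Real.rpow_one J
          linear_combination (-(A ^ p)) * h4
        rw [e3]
        exact mul_le_mul_of_nonneg_right hTlow' hJp.le
      have hAJ0 : 0 ≤ A / J := (div_pos hA hJ).le
      calc A / J = ((A / J) ^ p) ^ (1/p) := by
            rw [← Real.rpow_mul hAJ0, mul_one_div_cancel hp0, Real.rpow_one]
        _ ≤ ((1 / N * T) / D) ^ (1/p) :=
            Real.rpow_le_rpow (Real.rpow_nonneg hAJ0 p) hkey (by positivity)
  · -- second inequality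
    apply add_le_add le_rfl
    have gap : T ≤ (∑ i ∈ Finset.Icc 1 n, x i ^ p) - N * xbar ^ p := by
      have each : ∀ i ∈ Finset.Icc 1 n,
          xbar ^ p + p * xbar ^ (p-1) * (x i - xbar) + |x i - xbar| ^ p ≤ x i ^ p :=
        fun i hi => superquad_aux hp2 hxbar0 (hpos i hi)
      have hsle := Finset.sum_le_sum each
      rw [Finset.sum_add_distrib, Finset.sum_add_distrib, Finset.sum_const, hcardn,
        ← Finset.mul_sum] at hsle
      have hz : ∑ i ∈ Finset.Icc 1 n, (x i - xbar) = 0 := by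
        have := hdsum; simp only [hddef] at this; exact this
      rw [hz, nsmul_eq_mul, mul_zero] at hsle
      rw [← hTdef] at hsle
      rw [hNdef]
      linarith [hsle]
    have hSG : 1 / N * T ≤ 1 / N * (∑ i ∈ Finset.Icc 1 n, x i ^ p) - xbar ^ p := by
      have := mul_le_mul_of_nonneg_left gap (by positivity : (0:ℝ) ≤ 1/N)
      calc 1 / N * T ≤ 1 / N * ((∑ i ∈ Finset.Icc 1 n, x i ^ p) - N * xbar ^ p) := this
        _ = 1 / N * (∑ i ∈ Finset.Icc 1 n, x i ^ p) - xbar ^ p := by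
            field_simp
    apply Real.rpow_le_rpow (div_nonneg hS0 hDpos.le) _ (by positivity)
    gcongr
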